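/- For fixed t₁, if t₂ ↦ h₂^Y(t₁,t₂) is decreasing in t₂, then H^w_{X,Y}(t₁,t₂) ≤ −m_X(t₁,t₂) ln h₂^Y(t₁,t₂) − ∫_{t₁}^{t₂} [x f(x)/(F(t₂)−F(t₁))] ln[(G(x)−G(t₁))/(G(t₂)−G(t₁))] dx. -/

import Mathlib

open MeasureTheory Real

section AuxLemmas

/-- small helper: |log v| from two-sided bounds. -/
lemma abs_log_le_of_bounds {lo v hi : ℝ} (hlo : 0 < lo) (h1 : lo ≤ v) (h2 : v ≤ hi) :
    |Real.log v| ≤ |Real.log lo| + |Real.log hi| := by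
  have hv : 0 < v := lt_of_lt_of_le hlo h1
  rw [abs_le]
  constructor
  · have := Real.log_le_log hlo h1
    have := neg_abs_le (Real.log lo)
    have := abs_nonneg (Real.log hi)
    linarith
  · have := Real.log_le_log hv h2
    have := le_abs_self (Real.log hi)
    have := abs_nonneg (Real.log lo)
    linarith

lemma abs_log_le_weight {s T : ℝ} (hs : 0 < s) (hsT : s ≤ T) :
    |Real.log s| ≤ -Real.log s + 2 * |Real.log T| := by
  have h1 : Real.log s ≤ Real.log T := Real.log_le_log hs hsT
  have h2 : Real.log T ≤ |Real.log T| := le_abs_self _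
  have h3 := abs_nonneg (Real.log T)
  rcases abs_cases (Real.log s) with ⟨he, _⟩ | ⟨he, _⟩ <;> rw [he] <;> linarith

end AuxLemmas

/- ### slope bound lemmas -/

/-- Upper linear bound on increments from differentiability at the left endpoint
plus monotonicity. -/
lemma slope_upper_bound {H h : ℝ → ℝ} {t₁ t₂ : ℝ} (ht : t₁ < t₂)
    (hH : ∀ x, HasDerivAt H (h x) x) (hmono : MonotoneOn H (Set.Icc t₁ t₂)) :
    ∃ C > 0, ∀ x ∈ Set.Ioc t₁ t₂, H x - H t₁ ≤ C * (x - t₁) := by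
  have hslope : Filter.Tendsto (slope H t₁) (nhdsWithin t₁ {t₁}ᶜ) (nhds (h t₁)) :=
    hasDerivAt_iff_tendsto_slope.mp (hH t₁)
  have hev : ∀ᶠ y in nhdsWithin t₁ {t₁}ᶜ, slope H t₁ y < h t₁ + 1 :=
    hslope.eventually (Filter.Tendsto.eventually_lt_const (by linarith) Filter.tendsto_id)
  rw [eventually_nhdsWithin_iff, Metric.eventually_nhds_iff] at hev
  obtain ⟨δ, hδ, hball⟩ := hev
  set δ' : ℝ := min (δ / 2) (t₂ - t₁) with hδ'def
  have hδ'pos : 0 < δ' := lt_min (by linarith) (by linarith)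
  set C : ℝ := max (|h t₁| + 1) ((H t₂ - H t₁) / δ' + 1) with hCdef
  have hC0 : 0 < C := lt_of_lt_of_le (by positivity) (le_max_left _ _)
  refine ⟨C, hC0, fun x hx => ?_⟩
  rcases le_or_gt x (t₁ + δ') with hcase | hcase
  · -- near case
    have hxne : x ≠ t₁ := ne_of_gt hx.1
    have hdist : dist x t₁ < δ := by
      rw [Real.dist_eq, abs_of_pos (by linarith [hx.1] : (0:ℝ) < x - t₁)]
      have : δ' ≤ δ / 2 := min_le_left _ _
      linarith
    have := hball hdist hxne
    rw [slope_def_field] at this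
    have hxp : (0:ℝ) < x - t₁ := by linarith [hx.1]
    rw [div_lt_iff₀ hxp] at this
    have h1 : h t₁ + 1 ≤ C := le_trans (by linarith [le_abs_self (h t₁)]) (le_max_left _ _)
    nlinarith
  · -- far case
    have h1 : H x - H t₁ ≤ H t₂ - H t₁ := by
      have := hmono (Set.mem_Icc.mpr ⟨le_of_lt hx.1, hx.2⟩) (Set.mem_Icc.mpr ⟨le_of_lt ht, le_refl _⟩) hx.2
      linarith
    have h2 : H t₂ - H t₁ ≤ ((H t₂ - H t₁) / δ' + 1) * δ' := by
      rw [add_mul, div_mul_cancel₀ _ (ne_of_gt hδ'pos)]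
      linarith
    calc H x - H t₁ ≤ ((H t₂ - H t₁) / δ' + 1) * δ' := le_trans h1 h2
      _ ≤ C * (x - t₁) := by
          apply mul_le_mul (le_max_right _ _) (by linarith) (le_of_lt hδ'pos) (le_of_lt hC0)

/-- Lower linear bound on increments from differentiability at the left endpoint with
positive derivative, plus monotonicity. -/
lemma slope_lower_bound {H h : ℝ → ℝ} {t₁ t₂ : ℝ} (ht : t₁ < t₂) (hpos : 0 < h t₁)
    (hH : ∀ x, HasDerivAt H (h x) x) (hmono : MonotoneOn H (Set.Icc t₁ t₂)) :
    ∃ c > 0, ∀ x ∈ Set.Ioc t₁ t₂, c * (x - t₁) ≤ H x - H t₁ := by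
  have hslope : Filter.Tendsto (slope H t₁) (nhdsWithin t₁ {t₁}ᶜ) (nhds (h t₁)) :=
    hasDerivAt_iff_tendsto_slope.mp (hH t₁)
  have hev : ∀ᶠ y in nhdsWithin t₁ {t₁}ᶜ, h t₁ / 2 < slope H t₁ y :=
    hslope.eventually (Filter.Tendsto.eventually_const_lt (by linarith) Filter.tendsto_id)
  rw [eventually_nhdsWithin_iff, Metric.eventually_nhds_iff] at hev
  obtain ⟨δ, hδ, hball⟩ := hev
  set δ' : ℝ := min (δ / 2) ((t₂ - t₁) / 2) with hδ'def
  have hδ'pos : 0 < δ' := lt_min (by linarith) (by linarith)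
  have hδ'lt : t₁ + δ' < t₂ := by
    have : δ' ≤ (t₂ - t₁) / 2 := min_le_right _ _
    linarith
  have hnear : ∀ x ∈ Set.Ioc t₁ (t₁ + δ'), (h t₁ / 2) * (x - t₁) ≤ H x - H t₁ := by
    intro x hx
    have hxp : (0:ℝ) < x - t₁ := by linarith [hx.1]
    have hdist : dist x t₁ < δ := by
      rw [Real.dist_eq, abs_of_pos hxp]
      have : δ' ≤ δ / 2 := min_le_left _ _
      linarith [hx.2]
    have := hball hdist (ne_of_gt hx.1)
    rw [slope_def_field, lt_div_iff₀ hxp] at this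
    linarith
  set c : ℝ := min (h t₁ / 2) ((h t₁ / 2) * δ' / (t₂ - t₁)) with hcdef
  have hc0 : 0 < c := lt_min (by linarith) (div_pos (mul_pos (by linarith) hδ'pos) (by linarith))
  refine ⟨c, hc0, fun x hx => ?_⟩
  rcases le_or_gt x (t₁ + δ') with hcase | hcase
  · calc c * (x - t₁) ≤ (h t₁ / 2) * (x - t₁) := by
          apply mul_le_mul_of_nonneg_right (min_le_left _ _) (by linarith [hx.1])
      _ ≤ H x - H t₁ := hnear x ⟨hx.1, hcase⟩
  · have h1 : H (t₁ + δ') - H t₁ ≤ H x - H t₁ := by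
      have := hmono (Set.mem_Icc.mpr ⟨by linarith, by linarith⟩)
        (Set.mem_Icc.mpr ⟨le_of_lt hx.1, hx.2⟩) (le_of_lt hcase)
      linarith
    have h2 : (h t₁ / 2) * δ' ≤ H (t₁ + δ') - H t₁ := by
      have := hnear (t₁ + δ') ⟨by linarith, le_refl _⟩
      simpa using this
    have h3 : c * (x - t₁) ≤ (h t₁ / 2) * δ' := by
      have hcle : c ≤ (h t₁ / 2) * δ' / (t₂ - t₁) := min_le_right _ _
      have hxle : x - t₁ ≤ t₂ - t₁ := by linarith [hx.2]
      calc c * (x - t₁) ≤ ((h t₁ / 2) * δ' / (t₂ - t₁)) * (t₂ - t₁) := by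
            apply mul_le_mul hcle hxle (by linarith [hx.1]) (le_of_lt (div_pos (mul_pos (by linarith) hδ'pos) (by linarith)))
        _ = (h t₁ / 2) * δ' := div_mul_cancel₀ _ (by linarith : t₂ - t₁ ≠ 0)
    linarith


/- ### master integrability lemma -/

lemma log_weight_integrable {F f : ℝ → ℝ} {t₁ t₂ b C_F : ℝ} (ht : t₁ < t₂)
    (hF : ∀ x, HasDerivAt F (f x) x) (hf0 : ∀ x, 0 ≤ f x)
    (hb : Real.log (t₂ - t₁) ≤ b)
    (hCF : ∀ x ∈ Set.Ioc t₁ t₂, F x - F t₁ ≤ C_F * (x - t₁)) (hCF0 : 0 ≤ C_F)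
    (hfmeas : Measurable f) :
    IntegrableOn (fun x => f x * (b - Real.log (x - t₁))) (Set.Ioc t₁ t₂) volume := by
  have hmonoF : Monotone F := by
    apply monotone_of_deriv_nonneg (fun x => (hF x).differentiableAt)
    intro x; rw [(hF x).deriv]; exact hf0 x
  have hfint : IntegrableOn f (Set.Ioc t₁ t₂) volume := by
    have := intervalIntegral.intervalIntegrable_deriv_of_nonneg (g := F) (g' := f) (a := t₁) (b := t₂)
      (fun x _ => (hF x).continuousAt.continuousWithinAt)
      (fun x _ => hF x) (fun x _ => hf0 x)
    exact this.1
  -- the truncation sequence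
  set a : ℕ → ℝ := fun n => t₁ + (t₂ - t₁) / (n + 2) with hadef
  have han : ∀ n : ℕ, t₁ < a n ∧ a n < t₂ := by
    intro n
    constructor
    · have : (0:ℝ) < (t₂ - t₁) / (n + 2) := div_pos (by linarith) (by positivity)
      simp only [hadef]; linarith
    · have h2 : (t₂ - t₁) / (n + 2 : ℝ) < t₂ - t₁ := by
        apply div_lt_self (by linarith)
        have : (0:ℝ) ≤ (n : ℝ) := Nat.cast_nonneg n
        linarith
      simp only [hadef]; linarith
  have hatend : Filter.Tendsto a Filter.atTop (nhds t₁) := by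
    have h1 : Filter.Tendsto (fun n : ℕ => ((n : ℝ) + 2)) Filter.atTop Filter.atTop :=
      Filter.tendsto_atTop_add_const_right _ 2 tendsto_natCast_atTop_atTop
    have h2 : Filter.Tendsto (fun n : ℕ => (t₂ - t₁) / ((n : ℝ) + 2)) Filter.atTop (nhds 0) :=
      Filter.Tendsto.div_atTop tendsto_const_nhds h1
    have h3 := h2.const_add t₁
    simpa using h3
  -- nonnegativity of the weight
  have hwnonneg : ∀ x ∈ Set.Ioc t₁ t₂, 0 ≤ b - Real.log (x - t₁) := by
    intro x hx
    have h1 : Real.log (x - t₁) ≤ Real.log (t₂ - t₁) :=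
      Real.log_le_log (by linarith [hx.1]) (by linarith [hx.2])
    linarith
  -- truncated integrability
  have hfi : ∀ n : ℕ, IntegrableOn (fun x => f x * (b - Real.log (x - t₁)))
      (Set.Ioc (a n) t₂) volume := by
    intro n
    apply IntegrableOn.mul_continuousOn_of_subset
      (hfint.mono_set (Set.Ioc_subset_Ioc_left (le_of_lt (han n).1)))
      ?_ measurableSet_Ioc isCompact_Icc Set.Ioc_subset_Icc_self
    apply ContinuousOn.sub continuousOn_const
    apply ContinuousOn.log (continuousOn_id.sub continuousOn_const)
    intro x hx
    simp only [Set.mem_Icc] at hx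
    have h1 : t₁ < x := lt_of_lt_of_le (han n).1 hx.1
    simp only [Pi.sub_apply, id_eq]
    intro hc
    linarith
  -- the uniform bound via integration by parts
  set I : ℝ := (F t₂ - F t₁) * (b - Real.log (t₂ - t₁)) + C_F * (t₂ - t₁) with hIdef
  have hbound : ∀ n : ℕ,
      (∫ x in Set.Ioc (a n) t₂, ‖f x * (b - Real.log (x - t₁))‖) ≤ I := by
    intro n
    obtain ⟨han1, han2⟩ := han n
    have hsub : Set.Ioc (a n) t₂ ⊆ Set.Ioc t₁ t₂ := Set.Ioc_subset_Ioc_left (le_of_lt han1)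
    have hnorm : (∫ x in Set.Ioc (a n) t₂, ‖f x * (b - Real.log (x - t₁))‖)
        = ∫ x in Set.Ioc (a n) t₂, f x * (b - Real.log (x - t₁)) := by
      apply setIntegral_congr_fun measurableSet_Ioc
      intro x hx
      exact norm_of_nonneg (mul_nonneg (hf0 x) (hwnonneg x (hsub hx)))
    rw [hnorm, ← intervalIntegral.integral_of_le (le_of_lt han2)]
    -- integration by parts
    have hIBP := intervalIntegral.integral_mul_deriv_eq_deriv_mul
      (a := a n) (b := t₂)
      (u := fun x => F x - F t₁) (u' := f)
      (v := fun x => b - Real.log (x - t₁)) (v' := fun x => -(x - t₁)⁻¹)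
      (fun x _ => (hF x).sub_const _)
      ?hv ?hu' ?hv'
    case hv =>
      intro x hx
      rw [Set.uIcc_of_le (le_of_lt han2)] at hx
      have hxt : x - t₁ ≠ 0 := by have := hx.1; intro hc; nlinarith
      have : HasDerivAt (fun y => Real.log (y - t₁)) ((x - t₁)⁻¹) x := by
        simpa [Function.comp_def] using (Real.hasDerivAt_log hxt).comp x ((hasDerivAt_id x).sub_const t₁)
      simpa using (this.const_sub b)
    case hu' =>
      rw [intervalIntegrable_iff, Set.uIoc_of_le (le_of_lt han2)]
      exact hfint.mono_set (Set.Ioc_subset_Ioc_left (le_of_lt han1))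
    case hv' =>
      apply ContinuousOn.intervalIntegrable
      rw [Set.uIcc_of_le (le_of_lt han2)]
      apply ContinuousOn.neg
      apply ContinuousOn.inv₀ (continuousOn_id.sub continuousOn_const)
      intro x hx; simp only [Pi.sub_apply, id_eq]; intro hc; have := hx.1; linarith
    -- hIBP : ∫ (F x - F t₁) * (-(x-t₁)⁻¹) = (F t₂ - F t₁) * v t₂ - (F aₙ - F t₁) * v aₙ - ∫ f * v
    have hIBP' : (∫ x in (a n)..t₂, f x * (b - Real.log (x - t₁)))
        = (F t₂ - F t₁) * (b - Real.log (t₂ - t₁)) - (F (a n) - F t₁) * (b - Real.log (a n - t₁))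
          + ∫ x in (a n)..t₂, (F x - F t₁) * (x - t₁)⁻¹ := by
      have hswap : (∫ x in (a n)..t₂, (fun x => F x - F t₁) x * (-(x - t₁)⁻¹))
          = -∫ x in (a n)..t₂, (F x - F t₁) * (x - t₁)⁻¹ := by
        rw [← intervalIntegral.integral_neg]; congr 1; funext x; ring
      rw [hswap] at hIBP
      have := hIBP
      linarith [this]
    rw [hIBP']
    have hterm2 : 0 ≤ (F (a n) - F t₁) * (b - Real.log (a n - t₁)) := by
      apply mul_nonneg
      · have := hmonoF (le_of_lt han1); linarith
      · exact hwnonneg (a n) ⟨han1, le_of_lt han2⟩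
    have hterm3 : (∫ x in (a n)..t₂, (F x - F t₁) * (x - t₁)⁻¹) ≤ C_F * (t₂ - t₁) := by
      have hcont : ContinuousOn (fun x => (F x - F t₁) * (x - t₁)⁻¹) (Set.Icc (a n) t₂) := by
        apply ContinuousOn.mul
        · have hFcont : Continuous F := by
            rw [continuous_iff_continuousAt]; exact fun y => (hF y).continuousAt
          exact (hFcont.sub continuous_const).continuousOn
        · apply ContinuousOn.inv₀ (continuousOn_id.sub continuousOn_const)
          intro x hx; simp only [Pi.sub_apply, id_eq]; intro hc; have := hx.1; linarith
      have hint1 : IntervalIntegrable (fun x => (F x - F t₁) * (x - t₁)⁻¹) volume (a n) t₂ := by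
        apply ContinuousOn.intervalIntegrable
        rwa [Set.uIcc_of_le (le_of_lt han2)]
      have hmono := intervalIntegral.integral_mono_on (le_of_lt han2) hint1
        (intervalIntegrable_const (c := C_F)) ?_
      · calc (∫ x in (a n)..t₂, (F x - F t₁) * (x - t₁)⁻¹) ≤ ∫ _x in (a n)..t₂, C_F := hmono
          _ = (t₂ - a n) * C_F := by rw [intervalIntegral.integral_const]; simp
          _ ≤ C_F * (t₂ - t₁) := by nlinarith
      · intro x hx
        have hx1 : t₁ < x := lt_of_lt_of_le han1 hx.1
        have hxmem : x ∈ Set.Ioc t₁ t₂ := ⟨hx1, hx.2⟩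
        rw [← div_eq_mul_inv, div_le_iff₀ (by linarith : (0:ℝ) < x - t₁)]
        exact hCF x hxmem
    linarith
  exact MeasureTheory.integrableOn_Ioc_of_intervalIntegral_norm_bounded_left hfi hatend
    (Filter.Eventually.of_forall hbound)


/-- Interval inaccuracy measure H_{X,Y}(t₁,t₂). -/
noncomputable def inacc (f F g G : ℝ → ℝ) (t₁ t₂ : ℝ) : ℝ :=
  -∫ x in t₁..t₂, f x / (F t₂ - F t₁) * Real.log (g x / (G t₂ - G t₁))

/-- Weighted interval inaccuracy measure H^w_{X,Y}(t₁,t₂). -/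
noncomputable def wInacc (f F g G : ℝ → ℝ) (t₁ t₂ : ℝ) : ℝ :=
  -∫ x in t₁..t₂, x * (f x / (F t₂ - F t₁)) * Real.log (g x / (G t₂ - G t₁))

/-- General conditional mean m_X(t₁,t₂) = E(X | t₁ < X < t₂). -/
noncomputable def gcm (f F : ℝ → ℝ) (t₁ t₂ : ℝ) : ℝ :=
  (∫ x in t₁..t₂, x * f x) / (F t₂ - F t₁)
/-- First generalized failure rate h₁(t₁,t₂) = g(t₁)/(G(t₂)-G(t₁)). -/
noncomputable def gfr₁ (g G : ℝ → ℝ) (t₁ t₂ : ℝ) : ℝ := g t₁ / (G t₂ - G t₁)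

/-- Second generalized failure rate h₂(t₁,t₂) = g(t₂)/(G(t₂)-G(t₁)). -/
noncomputable def gfr₂ (g G : ℝ → ℝ) (t₁ t₂ : ℝ) : ℝ := g t₂ / (G t₂ - G t₁)

theorem stmt9 (f F g G : ℝ → ℝ) (t₁ t₂ : ℝ)
    (ht₁ : 0 < t₁) (ht : t₁ < t₂)
    (hD : F t₁ < F t₂ ∧ G t₁ < G t₂)              -- (t₁,t₂) ∈ D
    (hF : ∀ x, HasDerivAt F (f x) x) (hG : ∀ x, HasDerivAt G (g x) x)
    (hfpos : ∀ x, 0 ≤ f x) (hgpos : ∀ x, 0 < x → 0 < g x)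
    -- for fixed t₁, h₂^Y(t₁,·) is decreasing in t₂ on (t₁,∞)
    (hdec : AntitoneOn (fun s => gfr₂ g G t₁ s) (Set.Ioi t₁)) :
    wInacc f F g G t₁ t₂ ≤
      -gcm f F t₁ t₂ * Real.log (gfr₂ g G t₁ t₂)
        - ∫ x in t₁..t₂, x * f x / (F t₂ - F t₁)
            * Real.log ((G x - G t₁) / (G t₂ - G t₁)) := by
  obtain ⟨hDF, hDG⟩ := hD
  have ht₂ : 0 < t₂ := lt_trans ht₁ ht
  have hΔF : 0 < F t₂ - F t₁ := by linarith
  have hΔG : 0 < G t₂ - G t₁ := by linarith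
  have hT : 0 < t₂ - t₁ := by linarith
  -- continuity
  have hFcont : Continuous F := by
    rw [continuous_iff_continuousAt]; exact fun x => (hF x).continuousAt
  have hGcont : Continuous G := by
    rw [continuous_iff_continuousAt]; exact fun x => (hG x).continuousAt
  -- monotonicity
  have hmonoF : Monotone F := by
    apply monotone_of_deriv_nonneg (fun x => (hF x).differentiableAt)
    intro x; rw [(hF x).deriv]; exact hfpos x
  have hmonoG : MonotoneOn G (Set.Icc t₁ t₂) := by
    apply monotoneOn_of_deriv_nonneg (convex_Icc _ _) hGcont.continuousOn
    · intro x _; exact (hG x).differentiableAt.differentiableWithinAt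
    · intro x hx
      rw [interior_Icc] at hx
      rw [(hG x).deriv]
      exact le_of_lt (hgpos x (by linarith [hx.1]))
  -- slope bounds
  obtain ⟨C_G, hCG0, hCG⟩ := slope_upper_bound ht hG hmonoG
  obtain ⟨c_G, hcG0, hcG⟩ := slope_lower_bound ht (hgpos t₁ ht₁) hG hmonoG
  obtain ⟨C_F, hCF0, hCF⟩ := slope_upper_bound ht hF (hmonoF.monotoneOn _)
  -- basic facts about u x = G x - G t₁
  have hu_pos : ∀ x ∈ Set.Ioc t₁ t₂, 0 < G x - G t₁ := by
    intro x hx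
    have h1 := hcG x hx
    have : 0 < c_G * (x - t₁) := mul_pos hcG0 (by linarith [hx.1])
    linarith
  have hu_le : ∀ x ∈ Set.Ioc t₁ t₂, G x - G t₁ ≤ G t₂ - G t₁ := by
    intro x hx
    have := hmonoG (Set.mem_Icc.mpr ⟨le_of_lt hx.1, hx.2⟩)
      (Set.mem_Icc.mpr ⟨le_of_lt ht, le_refl _⟩) hx.2
    linarith
  -- failure rate facts
  have hL0 : 0 < gfr₂ g G t₁ t₂ := by
    rw [gfr₂]; exact div_pos (hgpos t₂ ht₂) hΔG
  have hrx : ∀ x ∈ Set.Ioc t₁ t₂, gfr₂ g G t₁ t₂ ≤ g x / (G x - G t₁) := by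
    intro x hx
    exact hdec (Set.mem_Ioi.mpr hx.1) (Set.mem_Ioi.mpr ht) hx.2
  have hg_lower : ∀ x ∈ Set.Ioc t₁ t₂, gfr₂ g G t₁ t₂ * (G x - G t₁) ≤ g x := by
    intro x hx
    have h1 := hrx x hx
    rw [le_div_iff₀ (hu_pos x hx)] at h1
    exact h1
  -- interval integrability of g and FTC
  have hgint : IntervalIntegrable g volume t₁ t₂ := by
    apply intervalIntegral.intervalIntegrable_deriv_of_nonneg (g := G)
      hGcont.continuousOn (fun x _ => hG x)
    intro x hx
    rw [min_eq_left ht.le] at hx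
    exact le_of_lt (hgpos x (by linarith [hx.1]))
  -- upper bound for g
  have hg_upper : ∀ x ∈ Set.Ioc t₁ t₂, g x ≤ 2 * C_G ^ 2 / c_G := by
    intro x hx
    have hxp : 0 < x - t₁ := by linarith [hx.1]
    have hup := hu_pos x hx
    set r : ℝ := g x / (G x - G t₁) with hrdef
    have hgx : g x = r * (G x - G t₁) := by
      rw [hrdef]; field_simp
    have hr0 : 0 ≤ r := div_nonneg (le_of_lt (hgpos x (by linarith [hx.1]))) (le_of_lt hup)
    -- FTC on [t₁, x]
    have hgx_int : IntervalIntegrable g volume t₁ x := by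
      apply hgint.mono_set
      rw [Set.uIcc_of_le (le_of_lt hx.1), Set.uIcc_of_le ht.le]
      exact Set.Icc_subset_Icc (le_refl _) hx.2
    have hFTC : G x - G t₁ = ∫ y in t₁..x, g y :=
      (intervalIntegral.integral_eq_sub_of_hasDerivAt (fun y _ => hG y) hgx_int).symm
    have hmono : (∫ y in t₁..x, (r * c_G) * (y - t₁)) ≤ ∫ y in t₁..x, g y := by
      apply intervalIntegral.integral_mono_on (le_of_lt hx.1)
      · apply ContinuousOn.intervalIntegrable
        exact (continuousOn_const.mul ((continuousOn_id.sub continuousOn_const)))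
      · exact hgx_int
      · intro y hy
        rcases eq_or_lt_of_le hy.1 with heq | hlt
        · rw [← heq]; simp
          exact le_of_lt (hgpos t₁ ht₁)
        · have hym : y ∈ Set.Ioc t₁ t₂ := ⟨hlt, le_trans hy.2 hx.2⟩
          have hr_y : r ≤ g y / (G y - G t₁) := by
            rw [hrdef]
            exact hdec (Set.mem_Ioi.mpr hlt) (Set.mem_Ioi.mpr hx.1) hy.2
          rw [le_div_iff₀ (hu_pos y hym)] at hr_y
          have h2 := hcG y hym
          calc (r * c_G) * (y - t₁) = r * (c_G * (y - t₁)) := by ring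
            _ ≤ r * (G y - G t₁) := by
                apply mul_le_mul_of_nonneg_left h2 hr0
            _ ≤ g y := hr_y
    have hval : (∫ y in t₁..x, (r * c_G) * (y - t₁)) = (r * c_G) * ((x - t₁) ^ 2 / 2) := by
      rw [intervalIntegral.integral_const_mul]
      congr 1
      have : (∫ y in t₁..x, (y - t₁)) = ∫ y in (t₁ - t₁)..(x - t₁), y :=
        intervalIntegral.integral_comp_sub_right (fun y => y) t₁
      rw [this]
      rw [integral_id]
      ring
    have hkey : (r * c_G) * ((x - t₁) ^ 2 / 2) ≤ G x - G t₁ := by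
      rw [← hval, hFTC]; exact hmono
    have hCGx := hCG x hx
    -- r * (x - t₁) ≤ 2 * C_G / c_G
    have h5 : r * (x - t₁) ≤ 2 * C_G / c_G := by
      rw [le_div_iff₀ hcG0]
      nlinarith [hkey, hCGx, hxp, hr0]
    rw [hgx]
    calc r * (G x - G t₁) ≤ r * (C_G * (x - t₁)) := mul_le_mul_of_nonneg_left hCGx hr0
      _ = C_G * (r * (x - t₁)) := by ring
      _ ≤ C_G * (2 * C_G / c_G) := mul_le_mul_of_nonneg_left h5 (le_of_lt hCG0)
      _ = 2 * C_G ^ 2 / c_G := by ring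
  -- measurability
  have hfmeas : Measurable f := by
    have : f = deriv F := funext fun x => ((hF x).deriv).symm
    rw [this]; exact measurable_deriv F
  have hgmeas : Measurable g := by
    have : g = deriv G := funext fun x => ((hG x).deriv).symm
    rw [this]; exact measurable_deriv G
  -- constants
  set K : ℝ := 2 * C_G ^ 2 / c_G with hKdef
  set c₁ : ℝ := gfr₂ g G t₁ t₂ * c_G with hc₁def
  have hc₁0 : 0 < c₁ := mul_pos hL0 hcG0
  set ΔG : ℝ := G t₂ - G t₁ with hΔGdef
  set b : ℝ := |Real.log (c₁ / ΔG)| + |Real.log (K / ΔG)| + |Real.log (c_G / ΔG)|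
      + 3 * |Real.log (t₂ - t₁)| with hbdef
  have hb : Real.log (t₂ - t₁) ≤ b := by
    have := le_abs_self (Real.log (t₂ - t₁))
    have := abs_nonneg (Real.log (c₁ / ΔG))
    have := abs_nonneg (Real.log (K / ΔG))
    have := abs_nonneg (Real.log (c_G / ΔG))
    have := abs_nonneg (Real.log (t₂ - t₁))
    rw [hbdef]
    linarith
  have hK0 : 0 < K := div_pos (by nlinarith) hcG0
  have hglo : ∀ x ∈ Set.Ioc t₁ t₂, c₁ * (x - t₁) ≤ g x := by
    intro x hx
    have h1 := hg_lower x hx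
    have h2 := hcG x hx
    calc c₁ * (x - t₁) = gfr₂ g G t₁ t₂ * (c_G * (x - t₁)) := by rw [hc₁def]; ring
      _ ≤ gfr₂ g G t₁ t₂ * (G x - G t₁) := mul_le_mul_of_nonneg_left h2 (le_of_lt hL0)
      _ ≤ g x := h1
  -- pointwise bounds on the two logarithms
  have hbound1 : ∀ x ∈ Set.Ioc t₁ t₂, |Real.log (g x / ΔG)| ≤ b - Real.log (x - t₁) := by
    intro x hx
    have hxp : 0 < x - t₁ := by linarith [hx.1]
    have h6 : (c₁ * (x - t₁)) / ΔG ≤ g x / ΔG := by gcongr; exact hglo x hx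
    have h7 : g x / ΔG ≤ K / ΔG := by gcongr; exact hg_upper x hx
    have h8 := abs_log_le_of_bounds (div_pos (mul_pos hc₁0 hxp) hΔG) h6 h7
    have h9 : Real.log ((c₁ * (x - t₁)) / ΔG) = Real.log (c₁ / ΔG) + Real.log (x - t₁) := by
      rw [show (c₁ * (x - t₁)) / ΔG = (c₁ / ΔG) * (x - t₁) by ring]
      exact Real.log_mul (ne_of_gt (div_pos hc₁0 hΔG)) (ne_of_gt hxp)
    have h10 := abs_log_le_weight hxp (by linarith [hx.2] : x - t₁ ≤ t₂ - t₁)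
    have h11 := abs_add_le (Real.log (c₁ / ΔG)) (Real.log (x - t₁))
    rw [h9] at h8
    have := abs_nonneg (Real.log (c_G / ΔG))
    have := abs_nonneg (Real.log (t₂ - t₁))
    rw [hbdef]
    linarith
  have hbound2 : ∀ x ∈ Set.Ioc t₁ t₂,
      |Real.log ((G x - G t₁) / ΔG)| ≤ b - Real.log (x - t₁) := by
    intro x hx
    have hxp : 0 < x - t₁ := by linarith [hx.1]
    have h6 : (c_G * (x - t₁)) / ΔG ≤ (G x - G t₁) / ΔG := by gcongr; exact hcG x hx
    have h7 : (G x - G t₁) / ΔG ≤ 1 := by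
      rw [div_le_one hΔG]; exact hu_le x hx
    have h8 := abs_log_le_of_bounds (div_pos (mul_pos hcG0 hxp) hΔG) h6 h7
    rw [Real.log_one, abs_zero, add_zero] at h8
    have h9 : Real.log ((c_G * (x - t₁)) / ΔG) = Real.log (c_G / ΔG) + Real.log (x - t₁) := by
      rw [show (c_G * (x - t₁)) / ΔG = (c_G / ΔG) * (x - t₁) by ring]
      exact Real.log_mul (ne_of_gt (div_pos hcG0 hΔG)) (ne_of_gt hxp)
    have h10 := abs_log_le_weight hxp (by linarith [hx.2] : x - t₁ ≤ t₂ - t₁)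
    have h11 := abs_add_le (Real.log (c_G / ΔG)) (Real.log (x - t₁))
    rw [h9] at h8
    have := abs_nonneg (Real.log (c₁ / ΔG))
    have := abs_nonneg (Real.log (K / ΔG))
    have := abs_nonneg (Real.log (t₂ - t₁))
    rw [hbdef]
    linarith
  -- master integrable function
  have hmaster : IntegrableOn (fun x => f x * (b - Real.log (x - t₁))) (Set.Ioc t₁ t₂) volume :=
    log_weight_integrable ht hF hfpos hb hCF (le_of_lt hCF0) hfmeas
  -- domination principle
  have hdom : ∀ φ : ℝ → ℝ, Measurable φ →
      (∀ x ∈ Set.Ioc t₁ t₂, |φ x| ≤ (t₂ / (F t₂ - F t₁)) * (f x * (b - Real.log (x - t₁)))) →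
      IntervalIntegrable φ volume t₁ t₂ := by
    intro φ hφm hφb
    rw [intervalIntegrable_iff, Set.uIoc_of_le ht.le]
    apply Integrable.mono (hmaster.const_mul (t₂ / (F t₂ - F t₁)))
      hφm.aestronglyMeasurable.restrict
    filter_upwards [ae_restrict_mem measurableSet_Ioc] with x hx
    rw [Real.norm_eq_abs, Real.norm_eq_abs]
    exact le_trans (hφb x hx) (le_abs_self _)
  -- the three integrands
  have habs_gen : ∀ x ∈ Set.Ioc t₁ t₂, ∀ W : ℝ, |W| ≤ b - Real.log (x - t₁) →
      |x * (f x / (F t₂ - F t₁)) * W| ≤ (t₂ / (F t₂ - F t₁)) * (f x * (b - Real.log (x - t₁))) := by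
    intro x hx W hW
    have hx0 : 0 < x := lt_trans ht₁ hx.1
    have h1 : 0 ≤ f x / (F t₂ - F t₁) := div_nonneg (hfpos x) (le_of_lt hΔF)
    have hWn : 0 ≤ b - Real.log (x - t₁) := le_trans (abs_nonneg W) hW
    have e : (t₂ / (F t₂ - F t₁)) * (f x * (b - Real.log (x - t₁)))
        = t₂ * (f x / (F t₂ - F t₁)) * (b - Real.log (x - t₁)) := by ring
    rw [e, abs_mul, abs_mul, abs_of_pos hx0, abs_of_nonneg h1]
    have s1 : x * (f x / (F t₂ - F t₁)) * |W|
        ≤ x * (f x / (F t₂ - F t₁)) * (b - Real.log (x - t₁)) :=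
      mul_le_mul_of_nonneg_left hW (mul_nonneg (le_of_lt hx0) h1)
    have s2 : x * (f x / (F t₂ - F t₁)) * (b - Real.log (x - t₁))
        ≤ t₂ * (f x / (F t₂ - F t₁)) * (b - Real.log (x - t₁)) :=
      mul_le_mul_of_nonneg_right (mul_le_mul_of_nonneg_right hx.2 h1) hWn
    linarith
  have hAint : IntervalIntegrable
      (fun x => x * (f x / (F t₂ - F t₁)) * Real.log (g x / ΔG)) volume t₁ t₂ := by
    apply hdom _ ((measurable_id.mul (hfmeas.div_const _)).mul ((hgmeas.div_const _).log))
    intro x hx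
    exact habs_gen x hx _ (hbound1 x hx)
  have hBint : IntervalIntegrable
      (fun x => x * f x / (F t₂ - F t₁) * Real.log ((G x - G t₁) / ΔG)) volume t₁ t₂ := by
    have hm : Measurable (fun x => x * f x / (F t₂ - F t₁) * Real.log ((G x - G t₁) / ΔG)) :=
      ((measurable_id.mul hfmeas).div_const _).mul
        (((hGcont.measurable.sub_const _).div_const _).log)
    apply hdom _ hm
    intro x hx
    have := habs_gen x hx _ (hbound2 x hx)
    rw [show x * f x / (F t₂ - F t₁) = x * (f x / (F t₂ - F t₁)) by ring]
    exact this
  have hfII : IntervalIntegrable f volume t₁ t₂ := by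
    apply intervalIntegral.intervalIntegrable_deriv_of_nonneg (g := F)
      hFcont.continuousOn (fun x _ => hF x)
    intro x _
    exact hfpos x
  have hPint : IntervalIntegrable (fun x => x * f x) volume t₁ t₂ := by
    rw [intervalIntegrable_iff, Set.uIoc_of_le ht.le]
    exact MeasureTheory.IntegrableOn.continuousOn_mul_of_subset continuous_id.continuousOn
      hfII.1 isCompact_Icc measurableSet_Ioc Set.Ioc_subset_Icc_self
  -- final assembly
  rw [wInacc, gcm]
  set L : ℝ := Real.log (gfr₂ g G t₁ t₂) with hLdef
  have hP' : IntervalIntegrable (fun x => (x * f x) * (L / (F t₂ - F t₁))) volume t₁ t₂ :=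
    hPint.mul_const _
  suffices h : ((∫ x in t₁..t₂, x * f x) / (F t₂ - F t₁)) * L
      + (∫ x in t₁..t₂, x * f x / (F t₂ - F t₁) * Real.log ((G x - G t₁) / ΔG))
      ≤ ∫ x in t₁..t₂, x * (f x / (F t₂ - F t₁)) * Real.log (g x / ΔG) by linarith
  have e1 : ((∫ x in t₁..t₂, x * f x) / (F t₂ - F t₁)) * L
      = ∫ x in t₁..t₂, (x * f x) * (L / (F t₂ - F t₁)) := by
    rw [intervalIntegral.integral_mul_const]; ring
  rw [e1, ← intervalIntegral.integral_add hP' hBint]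
  apply intervalIntegral.integral_mono_ae_restrict ht.le (hP'.add hBint) hAint
  have hne : ∀ᵐ x ∂(volume.restrict (Set.Icc t₁ t₂)), x ≠ t₁ := by
    apply ae_restrict_of_ae
    refine (MeasureTheory.ae_iff).mpr ?_
    simp only [ne_eq, not_not, Set.setOf_eq_eq_singleton]
    exact Real.volume_singleton
  filter_upwards [hne, ae_restrict_mem measurableSet_Icc] with x hxne hx
  have hxm : x ∈ Set.Ioc t₁ t₂ := ⟨lt_of_le_of_ne hx.1 (Ne.symm hxne), hx.2⟩
  have hgx0 : 0 < g x := hgpos x (lt_trans ht₁ hxm.1)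
  have hux0 := hu_pos x hxm
  have hkey : L + Real.log ((G x - G t₁) / ΔG) ≤ Real.log (g x / ΔG) := by
    have h1 : L ≤ Real.log (g x / (G x - G t₁)) := Real.log_le_log hL0 (hrx x hxm)
    rw [Real.log_div (ne_of_gt hgx0) (ne_of_gt hux0)] at h1
    rw [Real.log_div (ne_of_gt hux0) (ne_of_gt hΔG), Real.log_div (ne_of_gt hgx0) (ne_of_gt hΔG)]
    linarith
  have hfac : 0 ≤ x * f x / (F t₂ - F t₁) :=
    div_nonneg (mul_nonneg (le_of_lt (lt_trans ht₁ hxm.1)) (hfpos x)) (le_of_lt hΔF)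
  have hmul := mul_le_mul_of_nonneg_left hkey hfac
  calc (x * f x) * (L / (F t₂ - F t₁)) + x * f x / (F t₂ - F t₁) * Real.log ((G x - G t₁) / ΔG)
      = (x * f x / (F t₂ - F t₁)) * (L + Real.log ((G x - G t₁) / ΔG)) := by ring
    _ ≤ (x * f x / (F t₂ - F t₁)) * Real.log (g x / ΔG) := hmul
    _ = x * (f x / (F t₂ - F t₁)) * Real.log (g x / ΔG) := by ring
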